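/- FA(run,⊆) ⊆ FA(𝔸'), DFA(run,⊆) ⊆ DFA(𝔸'), CFA(run,⊆) ⊆ CFA(𝔸'), and CDFA(run,⊆) ⊆ CDFA(𝔸'). -/

import Mathlib

open Set

/-- A finite automaton used for recognizing ω-words over the alphabet `A`:
a finite type of states, a transition relation, an initial state and an
acceptance table (a set of sets of states). -/
structure OFA (A : Type) : Type 1 where
  Q : Type
  [finQ : Finite Q]
  T : Q → A → Q → Prop
  q0 : Q
  Acc : Set (Set Q)

attribute [instance] OFA.finQ

namespace OFA

variable {A : Type}

/-- Deterministic automaton: at most one successor per state and letter. -/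
def Deterministic (M : OFA A) : Prop :=
  ∀ p a q q', M.T p a q → M.T p a q' → q = q'

/-- Complete automaton: at least one successor per state and letter. -/
def Complete (M : OFA A) : Prop :=
  ∀ p a, ∃ q, M.T p a q

/-- `p` is an initial infinite path of `M` with label `x`. -/
def InitPath (M : OFA A) (p : ℕ → M.Q) (x : ℕ → A) : Prop :=
  p 0 = M.q0 ∧ ∀ i, M.T (p i) (x i) (p (i + 1))

/-- States visited at least once (at a positive index). -/
def runSet (M : OFA A) (p : ℕ → M.Q) : Set M.Q := {q | ∃ i, 0 < i ∧ p i = q}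

/-- States visited infinitely often. -/
def infSet (M : OFA A) (p : ℕ → M.Q) : Set M.Q := {q | ∀ n, ∃ i, n ≤ i ∧ p i = q}

/-- States visited finitely many times but at least once. -/
def finSet (M : OFA A) (p : ℕ → M.Q) : Set M.Q := M.runSet p \ M.infSet p

/-- States visited finitely many times or never. -/
def ninfSet (M : OFA A) (p : ℕ → M.Q) : Set M.Q := (M.infSet p)ᶜ

end OFA

/-- Selector for the set of states associated to a path. -/
inductive CSel | run | inf | fin | ninf

/-- Selector for the comparison relation with a member of the acceptance table. -/
inductive RSel | meet | sub | eq

def OFA.csel {A : Type} (M : OFA A) : CSel → (ℕ → M.Q) → Set M.Q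
  | .run => M.runSet
  | .inf => M.infSet
  | .fin => M.finSet
  | .ninf => M.ninfSet

def RSel.holds {Q : Type} : RSel → Set Q → Set Q → Prop
  | .meet => fun S F => (S ∩ F).Nonempty
  | .sub => fun S F => S ⊆ F
  | .eq => fun S F => S = F

/-- The ω-language accepted by `M` under the condition `(c, r)`. -/
def OFA.Lang {A : Type} (M : OFA A) (c : CSel) (r : RSel) : Set (ℕ → A) :=
  {x | ∃ p, M.InitPath p x ∧ ∃ F ∈ M.Acc, RSel.holds r (M.csel c p) F}

/-- The ω-language accepted by `M` under the condition 𝔸 : some `F ∈ Acc` with `F ⊆ run p`. -/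
def OFA.LangA {A : Type} (M : OFA A) : Set (ℕ → A) :=
  {x | ∃ p, M.InitPath p x ∧ ∃ F ∈ M.Acc, F ⊆ M.runSet p}

/-- The ω-language accepted by `M` under the condition 𝔸' : some `F ∈ Acc` with `F ⊈ run p`. -/
def OFA.LangA' {A : Type} (M : OFA A) : Set (ℕ → A) :=
  {x | ∃ p, M.InitPath p x ∧ ∃ F ∈ M.Acc, ¬ F ⊆ M.runSet p}

/-- The ω-language accepted by `M` under the condition 𝕃 : some `F ∈ Acc` with `F ⊆ inf p`. -/
def OFA.LangL {A : Type} (M : OFA A) : Set (ℕ → A) :=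
  {x | ∃ p, M.InitPath p x ∧ ∃ F ∈ M.Acc, F ⊆ M.infSet p}

/-- The ω-language accepted by `M` under the condition 𝕃' : some `F ∈ Acc` with `F ⊈ inf p`. -/
def OFA.LangL' {A : Type} (M : OFA A) : Set (ℕ → A) :=
  {x | ∃ p, M.InitPath p x ∧ ∃ F ∈ M.Acc, ¬ F ⊆ M.infSet p}

/-- The class of ω-languages of the form `L M` for automata `M` satisfying `P`. -/
def AutClass (A : Type) (P : OFA A → Prop) (L : (M : OFA A) → Set (ℕ → A)) :
    Set (Set (ℕ → A)) :=
  {X | ∃ M : OFA A, P M ∧ L M = X}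

/-- The finite factor `x_i x_{i+1} … x_{j-1}` of the ω-word `x`. -/
def extract {A : Type} (x : ℕ → A) (i j : ℕ) : List A :=
  (List.range (j - i)).map fun k => x (i + k)

/-- The ω-language `V · U^ω`: ω-words of the form `u₀u₁u₂⋯` with `u₀ ∈ V`
and all `uᵢ` (i ≥ 1) nonempty words of `U`, described via cut points. -/
def omegaPiece {A : Type} (V U : Language A) : Set (ℕ → A) :=
  {x | ∃ c : ℕ → ℕ, (∀ i, c i < c (i + 1)) ∧
    extract x 0 (c 0) ∈ V ∧ ∀ i, extract x (c i) (c (i + 1)) ∈ U}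

/-- An ω-language is ω-rational if it is a finite union `⋃ᵢ Vᵢ · Uᵢ^ω`
with all `Vᵢ`, `Uᵢ` rational (regular) languages of finite words. -/
def IsOmegaRat {A : Type} (L : Set (ℕ → A)) : Prop :=
  ∃ (n : ℕ) (V U : Fin n → Language A),
    (∀ i, (V i).IsRegular) ∧ (∀ i, (U i).IsRegular) ∧
    L = ⋃ i, omegaPiece (V i) (U i)

/-- Countable union of closed sets. -/
def IsFsigmaSet {X : Type*} [TopologicalSpace X] (S : Set X) : Prop :=
  ∃ f : ℕ → Set X, (∀ n, IsClosed (f n)) ∧ S = ⋃ n, f n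

/-- Countable intersection of open sets. -/
def IsGdeltaSet {X : Type*} [TopologicalSpace X] (S : Set X) : Prop :=
  ∃ f : ℕ → Set X, (∀ n, IsOpen (f n)) ∧ S = ⋂ n, f n

section Track

variable {A : Type}

/-- Auxiliary automaton tracking the set of visited states; goes to a sink `none`
as soon as the visited set is not contained in any table member. -/
abbrev OFA.track (M : OFA A) : OFA A where
  Q := (M.Q × Set M.Q) ⊕ Unit
  T := fun s a s' =>
    match s with
    | Sum.inr _ => s' = Sum.inr ()
    | Sum.inl (q, S) =>
      ((¬ ∃ F ∈ M.Acc, S ⊆ F) ∧ s' = Sum.inr () ∧ ∃ q', M.T q a q') ∨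
      ((∃ F ∈ M.Acc, S ⊆ F) ∧ ∃ q', M.T q a q' ∧ s' = Sum.inl (q', insert q' S))
  q0 := Sum.inl (M.q0, ∅)
  Acc := {{Sum.inr ()}}

lemma OFA.track_det (M : OFA A) (h : M.Deterministic) : M.track.Deterministic := by
  rintro (⟨q, S⟩ | u) a s s' hs hs'
  · simp only [OFA.track] at hs hs'
    rcases hs with ⟨hb, rfl, -⟩ | ⟨hg, q1, hq1, rfl⟩
    · rcases hs' with ⟨-, rfl, -⟩ | ⟨hg, -⟩
      · rfl
      · exact absurd hg hb
    · rcases hs' with ⟨hb, -⟩ | ⟨-, q2, hq2, rfl⟩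
      · exact absurd hg hb
      · rw [h q a q1 q2 hq1 hq2]
  · simp only [OFA.track] at hs hs'
    rw [hs, hs']

lemma OFA.track_comp (M : OFA A) (h : M.Complete) : M.track.Complete := by
  rintro (⟨q, S⟩ | u) a
  · by_cases hg : ∃ F ∈ M.Acc, S ⊆ F
    · obtain ⟨q', hq'⟩ := h q a
      exact ⟨Sum.inl (q', insert q' S), Or.inr ⟨hg, q', hq', rfl⟩⟩
    · obtain ⟨q', hq'⟩ := h q a
      exact ⟨Sum.inr (), Or.inl ⟨hg, rfl, q', hq'⟩⟩
  · exact ⟨Sum.inr (), rfl⟩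

lemma OFA.track_lang (M : OFA A) : M.track.LangA' = M.Lang CSel.run RSel.sub := by
  ext x
  constructor
  · rintro ⟨p', ⟨h0, hT⟩, F, hF, hFsub⟩
    simp only [OFA.track, Set.mem_singleton_iff] at hF
    subst hF
    -- the sink is never visited at a positive index
    have hnone : ∀ i, 0 < i → p' i ≠ Sum.inr () := by
      intro i hi hnone
      exact hFsub (by rintro s rfl; exact ⟨i, hi, hnone⟩)
    -- every state is of the form `Sum.inl _`
    have hsome : ∀ i, ∃ q S, p' i = Sum.inl (q, S) := by
      intro i
      rcases Nat.eq_zero_or_pos i with rfl | hi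
      · exact ⟨M.q0, ∅, h0⟩
      · rcases h : p' i with ⟨q, S⟩ | u
        · exact ⟨q, S, rfl⟩
        · exact absurd h (hnone i hi)
    choose p S hpS using hsome
    have h0' : p 0 = M.q0 ∧ S 0 = (∅ : Set M.Q) := by
      have h2 := (hpS 0).symm.trans h0
      have h3 : (p 0, S 0) = (M.q0, (∅ : Set M.Q)) := Sum.inl.inj h2
      exact ⟨congrArg Prod.fst h3, congrArg Prod.snd h3⟩
    have hstep : ∀ i, (∃ F ∈ M.Acc, S i ⊆ F) ∧ M.T (p i) (x i) (p (i + 1)) ∧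
        S (i + 1) = insert (p (i + 1)) (S i) := by
      intro i
      have := hT i
      rw [hpS i, hpS (i + 1)] at this
      simp only [OFA.track] at this
      rcases this with ⟨-, habs, -⟩ | ⟨hg, q', hq', heq⟩
      · exact absurd habs (by simp)
      · have h3 : (q', insert q' (S i)) = (p (i + 1), S (i + 1)) := Sum.inl.inj heq.symm
        have h1 : q' = p (i + 1) := congrArg Prod.fst h3
        have h2 : insert q' (S i) = S (i + 1) := congrArg Prod.snd h3
        exact ⟨hg, h1 ▸ hq', (h1 ▸ h2).symm⟩
    -- membership in S i
    have hmem : ∀ i q, (∃ j, 0 < j ∧ j ≤ i ∧ p j = q) → q ∈ S i := by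
      intro i
      induction i with
      | zero => rintro q ⟨j, hj, hj0, -⟩; omega
      | succ n ih =>
        rintro q ⟨j, hj, hjn, hpj⟩
        rw [(hstep n).2.2]
        rcases Nat.lt_or_ge j (n + 1) with hlt | hge
        · exact Set.mem_insert_iff.mpr (Or.inr (ih q ⟨j, hj, by omega, hpj⟩))
        · have : j = n + 1 := by omega
          subst this; exact hpj ▸ Set.mem_insert _ _
    -- bound the run set
    have hfin : (M.runSet p).Finite := Set.toFinite _
    have : ∃ N, M.runSet p ⊆ S N := by
      by_cases hne : (M.runSet p).Nonempty
      · have : ∀ q : M.runSet p, ∃ j, 0 < j ∧ p j = q := fun q => q.2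
        choose f hf using this
        obtain ⟨N, hN⟩ := Finite.exists_le f
        refine ⟨N, fun q hq => hmem N q ⟨f ⟨q, hq⟩, (hf ⟨q, hq⟩).1, hN ⟨q, hq⟩, (hf ⟨q, hq⟩).2⟩⟩
      · exact ⟨0, by rw [Set.not_nonempty_iff_eq_empty.mp hne]; exact Set.empty_subset _⟩
    obtain ⟨N, hN⟩ := this
    obtain ⟨F, hFacc, hSF⟩ := (hstep N).1
    refine ⟨p, ⟨h0'.1, fun i => (hstep i).2.1⟩, F, hFacc, hN.trans hSF⟩
  · rintro ⟨p, ⟨h0, hT⟩, F, hF, hsub⟩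
    set S : ℕ → Set M.Q := fun i => {q | ∃ j, 0 < j ∧ j ≤ i ∧ p j = q} with hS
    have hS0 : S 0 = ∅ := by
      ext q; simp only [hS, Set.mem_setOf_eq, Set.mem_empty_iff_false, iff_false]
      rintro ⟨j, hj, hj0, -⟩; omega
    have hSsucc : ∀ i, S (i + 1) = insert (p (i + 1)) (S i) := by
      intro i; ext q
      simp only [hS, Set.mem_setOf_eq, Set.mem_insert_iff]
      constructor
      · rintro ⟨j, hj, hjn, rfl⟩
        rcases Nat.lt_or_ge j (i + 1) with hlt | hge
        · exact Or.inr ⟨j, hj, by omega, rfl⟩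
        · have : j = i + 1 := by omega
          subst this; exact Or.inl rfl
      · rintro (rfl | ⟨j, hj, hjn, rfl⟩)
        · exact ⟨i + 1, by omega, le_refl _, rfl⟩
        · exact ⟨j, hj, by omega, rfl⟩
    have hgood : ∀ i, S i ⊆ F := by
      rintro i q ⟨j, hj, -, rfl⟩
      exact hsub ⟨j, hj, rfl⟩
    refine ⟨fun i => Sum.inl (p i, S i), ⟨?_, ?_⟩, {Sum.inr ()}, rfl, ?_⟩
    · show Sum.inl (p 0, S 0) = (Sum.inl (M.q0, ∅) : (M.Q × Set M.Q) ⊕ Unit)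
      rw [h0, hS0]
    · intro i
      show _ ∨ _
      exact Or.inr ⟨⟨F, hF, hgood i⟩, p (i + 1), hT i, by show Sum.inl (p (i + 1), S (i + 1)) = _; rw [hSsucc i]⟩
    · intro hcon
      have := hcon (Set.mem_singleton _)
      obtain ⟨i, -, hi⟩ := this
      exact Sum.inl_ne_inr hi

end Track

theorem stmt_4 (A : Type) [Fintype A] :
    AutClass A (fun _ : OFA A => True) (fun M => M.Lang CSel.run RSel.sub) ⊆ AutClass A (fun _ : OFA A => True) OFA.LangA' ∧
    AutClass A OFA.Deterministic (fun M => M.Lang CSel.run RSel.sub) ⊆ AutClass A OFA.Deterministic OFA.LangA' ∧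
    AutClass A OFA.Complete (fun M => M.Lang CSel.run RSel.sub) ⊆ AutClass A OFA.Complete OFA.LangA' ∧
    AutClass A (fun M : OFA A => M.Deterministic ∧ M.Complete) (fun M => M.Lang CSel.run RSel.sub) ⊆ AutClass A (fun M : OFA A => M.Deterministic ∧ M.Complete) OFA.LangA' := by
  refine ⟨?_, ?_, ?_, ?_⟩
  · rintro X ⟨M, -, hL⟩
    exact ⟨M.track, trivial, M.track_lang.trans hL⟩
  · rintro X ⟨M, hM, hL⟩
    exact ⟨M.track, M.track_det hM, M.track_lang.trans hL⟩
  · rintro X ⟨M, hM, hL⟩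
    exact ⟨M.track, M.track_comp hM, M.track_lang.trans hL⟩
  · rintro X ⟨M, ⟨hd, hc⟩, hL⟩
    exact ⟨M.track, ⟨M.track_det hd, M.track_comp hc⟩, M.track_lang.trans hL⟩
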